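/- arXiv:1405.0251 — 4 statements merged into one kernel-verified Lean document; each statement's English description precedes it below -/
import Mathlib

section
/- For fixed y > 0, the functions z ↦ |z| V(y/|z|) and x ↦ y U^{-1}(|x|) are convex conjugates of each other, where U^{-1} is the inverse of U extended by +∞ on [lim_{x→∞}U(x), ∞) if U is bounded. -/
open Set Filter

/-- For fixed `y > 0`, the functions `z ↦ |z| V(y/|z|)` (with value `0` at `z = 0`) and
`x ↦ y·U⁻¹(|x|)` are convex conjugates of each other, where `U⁻¹` inverts `U` on its range,
`U⁻¹ 0 = 0`, and `U⁻¹` equals `+∞` above `lim_{x→∞} U(x)` when `U` is bounded. -/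
theorem perspective_conjugate_inverse (U V : ℝ → ℝ) (Uinv : ℝ → EReal) (y : ℝ) (hy : 0 < y)
    (hU_mono : StrictMonoOn U (Ioi 0))
    (hU_conc : StrictConcaveOn ℝ (Ioi 0) U)
    (hU_diff : ContDiffOn ℝ 1 U (Ioi 0))
    (hInada0 : Tendsto (deriv U) (nhdsWithin 0 (Ioi 0)) atTop)
    (hInadaInfty : Tendsto (deriv U) atTop (nhds 0))
    (hU0 : Tendsto U (nhdsWithin 0 (Ioi 0)) (nhds 0))
    (hV : ∀ t ∈ Ioi (0:ℝ), V t = sSup {v : ℝ | ∃ x ∈ Ioi (0:ℝ), v = U x - x * t})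
    (hinv : ∀ x ∈ Ioi (0:ℝ), Uinv (U x) = (x : EReal))
    (hinv0 : Uinv 0 = 0)
    (htop : ∀ t : ℝ, (∀ x ∈ Ioi (0:ℝ), U x < t) → Uinv t = ⊤)
    (f : ℝ → ℝ)
    (hf : ∀ z : ℝ, f z = if z = 0 then 0 else |z| * V (y / |z|)) :
    (∀ x : ℝ, (y : EReal) * Uinv |x| = ⨆ z : ℝ, ((x * z : ℝ) : EReal) - (f z : EReal)) ∧
    (∀ z : ℝ, (f z : EReal) = ⨆ x : ℝ, ((x * z : ℝ) : EReal) - (y : EReal) * Uinv |x|) := by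
  -- ## Basic facts about U
  have hUc : ContinuousOn U (Ioi 0) := hU_diff.continuousOn
  have hUdiff : ∀ q ∈ Ioi (0:ℝ), DifferentiableAt ℝ U q := fun q hq =>
    (hU_diff.differentiableOn one_ne_zero).differentiableAt (isOpen_Ioi.mem_nhds hq)
  have hU_nonneg : ∀ q ∈ Ioi (0:ℝ), 0 ≤ U q := by
    intro q hq
    refine le_of_tendsto hU0 ?_
    filter_upwards [eventually_mem_nhdsWithin,
      eventually_nhdsWithin_of_eventually_nhds (eventually_lt_nhds hq)] with r hr hr'
    exact (hU_mono hr hq hr').le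
  have hUpos : ∀ q ∈ Ioi (0:ℝ), 0 < U q := by
    intro q hq
    have h2 : (0:ℝ) < q/2 := by linarith [mem_Ioi.mp hq]
    exact lt_of_le_of_lt (hU_nonneg _ h2) (hU_mono h2 hq (by linarith [mem_Ioi.mp hq]))
  have tangent : ∀ q₀ ∈ Ioi (0:ℝ), ∀ q ∈ Ioi (0:ℝ),
      U q ≤ U q₀ + deriv U q₀ * (q - q₀) := by
    intro q₀ hq₀ q hq
    rcases lt_trichotomy q q₀ with h | rfl | h
    · have := hU_conc.concaveOn.deriv_le_slope hq hq₀ h (hUdiff q₀ hq₀)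
      rw [slope_def_field] at this
      have hne : q₀ - q > 0 := by linarith
      rw [le_div_iff₀ hne] at this
      nlinarith
    · simp
    · have := hU_conc.concaveOn.slope_le_deriv hq₀ hq h (hUdiff q₀ hq₀)
      rw [slope_def_field] at this
      have hne : q - q₀ > 0 := by linarith
      rw [div_le_iff₀ hne] at this
      nlinarith
  have hderiv_pos : ∀ q ∈ Ioi (0:ℝ), 0 < deriv U q := by
    intro q hq
    have h1 : q < q + 1 := by linarith
    have hq1 : q + 1 ∈ Ioi (0:ℝ) := by
      simp only [mem_Ioi] at hq ⊢; linarith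
    have h3 := hU_conc.concaveOn.slope_le_deriv hq hq1 h1 (hUdiff q hq)
    rw [slope_def_field] at h3
    have h4 := hU_mono hq hq1 h1
    have h2 : (0:ℝ) < (U (q+1) - U q) / (q + 1 - q) := by
      apply div_pos <;> linarith
    linarith
  -- ## Facts about V
  have hbdd : ∀ t : ℝ, 0 < t → BddAbove {v : ℝ | ∃ x ∈ Ioi (0:ℝ), v = U x - x * t} := by
    intro t ht
    obtain ⟨q₁, hq₁pos, hq₁⟩ : ∃ q₁ : ℝ, 0 < q₁ ∧ deriv U q₁ < t := by
      have := (hInadaInfty.eventually_lt_const ht).and (eventually_gt_atTop (0:ℝ))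
      obtain ⟨q₁, h1, h2⟩ := this.exists
      exact ⟨q₁, h2, h1⟩
    refine ⟨U q₁ - deriv U q₁ * q₁, ?_⟩
    rintro v ⟨x, hx, rfl⟩
    have h1 := tangent q₁ hq₁pos x hx
    nlinarith [mem_Ioi.mp hx]
  have hne : ∀ t : ℝ, Set.Nonempty {v : ℝ | ∃ x ∈ Ioi (0:ℝ), v = U x - x * t} :=
    fun t => ⟨U 1 - 1 * t, 1, by norm_num⟩
  have hV_ge : ∀ t : ℝ, 0 < t → ∀ q ∈ Ioi (0:ℝ), U q - q * t ≤ V t := by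
    intro t ht q hq
    rw [hV t ht]
    exact le_csSup (hbdd t ht) ⟨q, hq, rfl⟩
  have hV_le : ∀ t : ℝ, 0 < t → ∀ B : ℝ, (∀ q ∈ Ioi (0:ℝ), U q - q * t ≤ B) → V t ≤ B := by
    intro t ht B hB
    rw [hV t ht]
    exact csSup_le (hne t) (by rintro v ⟨q, hq, rfl⟩; exact hB q hq)
  have hV_nonneg : ∀ t : ℝ, 0 < t → 0 ≤ V t := by
    intro t ht
    have htend : Tendsto (fun q => U q - q * t) (nhdsWithin 0 (Ioi 0)) (nhds 0) := by
      have h2 : Tendsto (fun q : ℝ => q * t) (nhdsWithin 0 (Ioi 0)) (nhds 0) := by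
        have h0 : Tendsto (fun q : ℝ => q) (nhds 0) (nhds 0) := continuous_id.tendsto 0
        have := h0.mul_const t
        simp only [zero_mul] at this
        exact this.mono_left nhdsWithin_le_nhds
      simpa using hU0.sub h2
    refine le_of_tendsto htend ?_
    filter_upwards [eventually_mem_nhdsWithin] with q hq
    exact hV_ge t ht q hq
  -- ## Facts about f
  have hflub : ∀ z : ℝ, 0 < z → IsLUB {w : ℝ | ∃ q ∈ Ioi (0:ℝ), w = z * U q - q * y} (f z) := by
    intro z hz
    have hz0 : z ≠ 0 := ne_of_gt hz
    have hfz : f z = z * V (y / z) := by rw [hf z, if_neg hz0, abs_of_pos hz]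
    have hyz : 0 < y / z := div_pos hy hz
    constructor
    · rintro w ⟨q, hq, rfl⟩
      have h1 := hV_ge (y/z) hyz q hq
      have h2 : z * (U q - q * (y/z)) ≤ z * V (y/z) :=
        mul_le_mul_of_nonneg_left h1 hz.le
      rw [hfz]
      calc z * U q - q * y = z * (U q - q * (y/z)) := by field_simp
        _ ≤ _ := h2
    · intro B hB
      rw [hfz, ← le_div_iff₀' hz]
      refine hV_le (y/z) hyz (B/z) ?_
      intro q hq
      rw [le_div_iff₀' hz]
      have h3 := hB ⟨q, hq, rfl⟩
      calc z * (U q - q * (y/z)) = z * U q - q * y := by field_simp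
        _ ≤ B := h3
  have hf_nonneg : ∀ z : ℝ, 0 ≤ f z := by
    intro z
    rcases eq_or_ne z 0 with rfl | h
    · simp [hf]
    · rw [hf z, if_neg h]
      have hz : 0 < |z| := abs_pos.mpr h
      exact mul_nonneg hz.le (hV_nonneg _ (div_pos hy hz))
  have hf_abs : ∀ z : ℝ, f z = f |z| := by
    intro z
    rw [hf z, hf |z|, abs_abs]
    simp [abs_eq_zero]
  have hf0 : f 0 = 0 := by rw [hf 0, if_pos rfl]
  -- ## Classification of nonnegative reals
  have hclass : ∀ t : ℝ, 0 < t → (∃ q ∈ Ioi (0:ℝ), U q = t) ∨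
      ((∀ q ∈ Ioi (0:ℝ), U q < t) ∧ Uinv t = ⊤) := by
    intro t ht
    by_cases h : ∀ q ∈ Ioi (0:ℝ), U q < t
    · exact Or.inr ⟨h, htop t h⟩
    · left
      push_neg at h
      obtain ⟨q₀, hq₀, hq₀t⟩ := h
      obtain ⟨p, hp1, hp2, hp3⟩ : ∃ p : ℝ, p ∈ Ioi (0:ℝ) ∧ U p < t ∧ p < q₀ := by
        have e1 : ∀ᶠ p in nhdsWithin 0 (Ioi 0), U p < t := hU0.eventually_lt_const ht
        have e2 : ∀ᶠ p in nhdsWithin (0:ℝ) (Ioi 0), p < q₀ :=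
          eventually_nhdsWithin_of_eventually_nhds (eventually_lt_nhds hq₀)
        obtain ⟨p, h1, h2, h3⟩ := (eventually_mem_nhdsWithin.and (e1.and e2)).exists
        exact ⟨p, h1, h2, h3⟩
      have hsub : Icc p q₀ ⊆ Ioi (0:ℝ) := fun r hr => lt_of_lt_of_le hp1 hr.1
      have himg := intermediate_value_Icc hp3.le (hUc.mono hsub)
      obtain ⟨q, hq, hqt⟩ := himg ⟨hp2.le, hq₀t⟩
      exact ⟨q, hsub hq, hqt⟩
  constructor
  -- ## Part 1
  · intro x
    rcases eq_or_lt_of_le (abs_nonneg x) with h0 | hpos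
    · -- x = 0
      have hx0 : x = 0 := abs_eq_zero.mp h0.symm
      subst hx0
      rw [abs_zero, hinv0, mul_zero]
      refine le_antisymm ?_ (iSup_le fun z => ?_)
      · have h1 : ((0 * (0:ℝ) : ℝ) : EReal) - (f 0 : EReal) = (0:EReal) := by
          rw [hf0]; norm_num
        exact h1 ▸ le_iSup (fun z : ℝ => ((0 * z : ℝ) : EReal) - (f z : EReal)) 0
      · rw [← EReal.coe_sub, ← EReal.coe_zero, EReal.coe_le_coe_iff]
        have := hf_nonneg z
        nlinarith
    · rcases hclass |x| hpos with ⟨q₀, hq₀, hUq₀⟩ | ⟨hall, hUtop⟩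
      · -- |x| in the range of U
        rw [← hUq₀, hinv q₀ hq₀, ← EReal.coe_mul]
        have hxabs : |x| = U q₀ := hUq₀.symm
        set d := deriv U q₀ with hd
        have hdpos : 0 < d := hderiv_pos q₀ hq₀
        have hub : ∀ z : ℝ, x * z - f z ≤ y * q₀ := by
          intro z
          rcases eq_or_ne z 0 with rfl | hz
          · rw [hf0]
            have : 0 < y * q₀ := mul_pos hy (mem_Ioi.mp hq₀)
            nlinarith
          · have hw : 0 < |z| := abs_pos.mpr hz
            have h1 : |z| * U q₀ - q₀ * y ≤ f |z| := (hflub |z| hw).1 ⟨q₀, hq₀, rfl⟩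
            have h2 : x * z ≤ |x| * |z| := by rw [← abs_mul]; exact le_abs_self _
            rw [hf_abs z]
            rw [hxabs] at h2
            nlinarith
        set z₀ := y / d with hz₀def
        have hz₀pos : 0 < z₀ := div_pos hy hdpos
        set zs := if x < 0 then -z₀ else z₀ with hzs
        have hxz : x * zs = |x| * z₀ := by
          rw [hzs]
          split_ifs with hxneg
          · rw [abs_of_neg hxneg]; ring
          · rw [abs_of_nonneg (not_lt.mp hxneg)]
        have hzsabs : |zs| = z₀ := by
          rw [hzs]; split_ifs
          · rw [abs_neg, abs_of_pos hz₀pos]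
          · exact abs_of_pos hz₀pos
        have hfzs : f zs = f z₀ := by rw [hf_abs zs, hzsabs]
        have hfle : f z₀ ≤ |x| * z₀ - y * q₀ := by
          apply (hflub z₀ hz₀pos).2
          rintro w ⟨q, hq, rfl⟩
          have ht := tangent q₀ hq₀ q hq
          have hzd : z₀ * d = y := div_mul_cancel₀ y hdpos.ne'
          rw [hxabs]
          have key : z₀ * U q ≤ z₀ * U q₀ + y * (q - q₀) := by
            calc z₀ * U q ≤ z₀ * (U q₀ + d * (q - q₀)) :=
                  mul_le_mul_of_nonneg_left ht hz₀pos.le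
              _ = z₀ * U q₀ + (z₀ * d) * (q - q₀) := by ring
              _ = z₀ * U q₀ + y * (q - q₀) := by rw [hzd]
          linarith
        refine le_antisymm ?_ (iSup_le fun z => ?_)
        · refine le_trans ?_ (le_iSup _ zs)
          rw [hfzs, hxz, ← EReal.coe_sub, EReal.coe_le_coe_iff]
          linarith
        · rw [← EReal.coe_sub, EReal.coe_le_coe_iff]
          exact hub z
      · -- |x| above the range of U
        rw [hUtop, EReal.coe_mul_top_of_pos hy, eq_comm, iSup_eq_top]
        intro b hb
        have hx0 : x ≠ 0 := by
          intro h; rw [h, abs_zero] at hpos; exact lt_irrefl _ hpos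
        induction b with
        | bot =>
          refine ⟨0, ?_⟩
          rw [← EReal.coe_sub]
          exact EReal.bot_lt_coe _
        | top => exact absurd hb (lt_irrefl _)
        | coe M =>
          set q₁ : ℝ := max 1 ((M+1)/y) with hq₁def
          have hq₁pos : (0:ℝ) < q₁ := lt_of_lt_of_le one_pos (le_max_left _ _)
          have hq₁mem : q₁ ∈ Ioi (0:ℝ) := hq₁pos
          have hq₁y : M + 1 ≤ q₁ * y := by
            have := le_max_right 1 ((M+1)/y)
            rw [div_le_iff₀ hy] at this
            linarith
          have hδpos : 0 < |x| - U q₁ := by linarith [hall q₁ hq₁mem]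
          set n : ℝ := max 1 ((M+1)/(|x| - U q₁)) with hndef
          have hnpos : (0:ℝ) < n := lt_of_lt_of_le one_pos (le_max_left _ _)
          have hnδ : M + 1 ≤ n * (|x| - U q₁) := by
            have := le_max_right 1 ((M+1)/(|x| - U q₁))
            rw [div_le_iff₀ hδpos] at this
            linarith
          have hfn : f n ≤ |x| * n - (M + 1) := by
            apply (hflub n hnpos).2
            rintro w ⟨q, hq, rfl⟩
            rcases le_or_gt q₁ q with hq' | hq'
            · have h5 : q₁ * y ≤ q * y := mul_le_mul_of_nonneg_right hq' hy.le
              have h6 := hall q hq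
              nlinarith
            · have h5 : U q < U q₁ := hU_mono hq hq₁mem hq'
              have h6 : (0:ℝ) ≤ q * y := mul_nonneg (le_of_lt hq) hy.le
              nlinarith
          set zs := if x < 0 then -n else n with hzs
          have hxz : x * zs = |x| * n := by
            rw [hzs]
            split_ifs with hxneg
            · rw [abs_of_neg hxneg]; ring
            · rw [abs_of_nonneg (not_lt.mp hxneg)]
          have hzsabs : |zs| = n := by
            rw [hzs]; split_ifs
            · rw [abs_neg, abs_of_pos hnpos]
            · exact abs_of_pos hnpos
          refine ⟨zs, ?_⟩
          rw [hf_abs zs, hzsabs, hxz, ← EReal.coe_sub, EReal.coe_lt_coe_iff]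
          linarith
  -- ## Part 2
  · intro z
    have hub : ∀ x : ℝ, ((x * z : ℝ) : EReal) - (y : EReal) * Uinv |x| ≤ (f z : EReal) := by
      intro x
      rcases eq_or_lt_of_le (abs_nonneg x) with h0 | hpos
      · have hx0 : x = 0 := abs_eq_zero.mp h0.symm
        subst hx0
        rw [abs_zero, hinv0, mul_zero, zero_mul]
        simpa using hf_nonneg z
      · rcases hclass |x| hpos with ⟨q₀, hq₀, hUq₀⟩ | ⟨hall, hUtop⟩
        · rw [← hUq₀, hinv q₀ hq₀, ← EReal.coe_mul, ← EReal.coe_sub, EReal.coe_le_coe_iff]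
          have hxabs : |x| = U q₀ := hUq₀.symm
          rcases eq_or_ne z 0 with rfl | hz
          · have := hf0
            have : 0 < y * q₀ := mul_pos hy (mem_Ioi.mp hq₀)
            nlinarith [hf_nonneg (0:ℝ)]
          · have hw : 0 < |z| := abs_pos.mpr hz
            have h1 : |z| * U q₀ - q₀ * y ≤ f |z| := (hflub |z| hw).1 ⟨q₀, hq₀, rfl⟩
            have h2 : x * z ≤ |x| * |z| := by rw [← abs_mul]; exact le_abs_self _
            rw [hf_abs z]
            rw [hxabs] at h2
            nlinarith
        · rw [hUtop, EReal.coe_mul_top_of_pos hy, EReal.sub_top]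
          exact bot_le
    rcases eq_or_ne z 0 with rfl | hz
    · refine le_antisymm ?_ (iSup_le hub)
      have h1 : ((0 * (0:ℝ) : ℝ) : EReal) - (y:EReal) * Uinv |(0:ℝ)| = ((f 0 : ℝ) : EReal) := by
        rw [abs_zero, hinv0, mul_zero, hf0]; norm_num
      calc ((f 0 : ℝ) : EReal)
          = ((0 * (0:ℝ) : ℝ) : EReal) - (y:EReal) * Uinv |(0:ℝ)| := h1.symm
        _ ≤ _ := le_iSup (fun x : ℝ => ((x * 0 : ℝ) : EReal) - (y:EReal) * Uinv |x|) 0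
    · have hw : 0 < |z| := abs_pos.mpr hz
      have hterm : ∀ q ∈ Ioi (0:ℝ), ((|z| * U q - q * y : ℝ) : EReal) ≤
          ⨆ x : ℝ, ((x * z : ℝ) : EReal) - (y : EReal) * Uinv |x| := by
        intro q hq
        have hUq : 0 < U q := hUpos q hq
        set xs : ℝ := if z < 0 then -(U q) else U q with hxs
        have hxsabs : |xs| = U q := by
          rw [hxs]; split_ifs
          · rw [abs_neg, abs_of_pos hUq]
          · exact abs_of_pos hUq
        have hxsz : xs * z = U q * |z| := by
          rw [hxs]
          split_ifs with hzneg
          · rw [abs_of_neg hzneg]; ring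
          · rw [abs_of_nonneg (not_lt.mp hzneg)]
        refine le_trans ?_ (le_iSup _ xs)
        rw [hxsz, hxsabs, hinv q hq, ← EReal.coe_mul, ← EReal.coe_sub, EReal.coe_le_coe_iff]
        linarith
      rw [hf_abs z]
      refine le_antisymm ?_ (hf_abs z ▸ iSup_le hub)
      rcases eq_top_or_lt_top (⨆ x : ℝ, ((x * z : ℝ) : EReal) - (y : EReal) * Uinv |x|)
        with htop' | hlt
      · rw [htop']; exact le_top
      · obtain ⟨c, hc⟩ : ∃ c : ℝ,
            (⨆ x : ℝ, ((x * z : ℝ) : EReal) - (y : EReal) * Uinv |x|) = (c : EReal) := by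
          have hge : ((|z| * U 1 - 1 * y : ℝ) : EReal) ≤
              ⨆ x : ℝ, ((x * z : ℝ) : EReal) - (y : EReal) * Uinv |x| :=
            hterm 1 (by norm_num)
          have hnebot : (⨆ x : ℝ, ((x * z : ℝ) : EReal) - (y : EReal) * Uinv |x|) ≠ ⊥ := by
            intro h
            rw [h, le_bot_iff] at hge
            exact (EReal.coe_ne_bot _) hge
          lift (⨆ x : ℝ, ((x * z : ℝ) : EReal) - (y : EReal) * Uinv |x|) to ℝ
            using ⟨hlt.ne, hnebot⟩ with c hc
          exact ⟨c, rfl⟩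
        rw [hc, EReal.coe_le_coe_iff]
        refine (hflub |z| hw).2 ?_
        rintro w ⟨q, hq, rfl⟩
        have := hterm q hq
        rw [hc, EReal.coe_le_coe_iff] at this
        exact this
end

section
/- If the asymptotic elasticity AE(U) := limsup_{x→∞} x U'(x)/U(x) is strictly less than 1, then V satisfies the Δ₂-type growth condition: there exist constants a, b > 0 such that V(y/2) ≤ a V(y) + b(y + 1) for all y > 0. -/
open Set Filter

/-- If the asymptotic elasticity `AE(U) = limsup_{x→∞} x U'(x)/U(x)` is strictly less
than `1`, then the conjugate `V` satisfies a Δ₂-type growth condition: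
there exist `a, b > 0` with `V(y/2) ≤ a V(y) + b (y+1)` for all `y > 0`. -/
theorem asymptoticElasticity_implies_Delta2 (U V : ℝ → ℝ)
    (hU_mono : StrictMonoOn U (Ioi 0))
    (hU_conc : StrictConcaveOn ℝ (Ioi 0) U)
    (hU_diff : ContDiffOn ℝ 1 U (Ioi 0))
    (hInada0 : Tendsto (deriv U) (nhdsWithin 0 (Ioi 0)) atTop)
    (hInadaInfty : Tendsto (deriv U) atTop (nhds 0))
    (hU0 : Tendsto U (nhdsWithin 0 (Ioi 0)) (nhds 0))
    (hV : ∀ y ∈ Ioi (0:ℝ), V y = sSup {v : ℝ | ∃ x ∈ Ioi (0:ℝ), v = U x - x * y})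
    (hAE : Filter.limsup (fun x => x * deriv U x / U x) atTop < 1) :
    ∃ a b : ℝ, 0 < a ∧ 0 < b ∧ ∀ y > 0, V (y / 2) ≤ a * V y + b * (y + 1) := by
  have hdiff : ∀ x ∈ Ioi (0:ℝ), DifferentiableAt ℝ U x := fun x hx =>
    (hU_diff.differentiableOn one_ne_zero).differentiableAt (isOpen_Ioi.mem_nhds hx)
  have hmono := hU_mono.monotoneOn
  have hconc := hU_conc.concaveOn
  -- U is nonnegative on (0,∞)
  have hUnonneg : ∀ t ∈ Ioi (0:ℝ), 0 ≤ U t := by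
    intro t ht
    by_contra h
    push_neg at h
    have h1 : ∀ᶠ s in nhdsWithin 0 (Ioi 0), U t < U s :=
      hU0.eventually (eventually_gt_nhds h)
    have h2 : ∀ᶠ s in nhdsWithin (0:ℝ) (Ioi 0), s ∈ Ioi (0:ℝ) := self_mem_nhdsWithin
    have h3 : ∀ᶠ s in nhdsWithin (0:ℝ) (Ioi 0), s < t :=
      (eventually_lt_nhds ht).filter_mono nhdsWithin_le_nhds
    obtain ⟨s, hs1, hs2, hs3⟩ := (h1.and (h2.and h3)).exists
    exact absurd (hU_mono hs2 ht hs3) (not_lt.mpr hs1.le)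
  -- U is positive on (0,∞)
  have hUpos : ∀ t ∈ Ioi (0:ℝ), 0 < U t := by
    intro t ht
    have h2 : (t/2) ∈ Ioi (0:ℝ) := mem_Ioi.mpr (half_pos ht)
    exact lt_of_le_of_lt (hUnonneg _ h2) (hU_mono h2 ht (half_lt_self ht))
  -- the defining set of V is bounded above
  have hbdd : ∀ y : ℝ, 0 < y → BddAbove {v : ℝ | ∃ x ∈ Ioi (0:ℝ), v = U x - x * y} := by
    intro y hy
    obtain ⟨z, hz1, hz2⟩ : ∃ z : ℝ, 1 ≤ z ∧ deriv U z < y := by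
      obtain ⟨z, h1, h2⟩ :=
        ((hInadaInfty.eventually_mem (Iio_mem_nhds hy)).and (eventually_ge_atTop 1)).exists
      exact ⟨z, h2, h1⟩
    have hz0 : z ∈ Ioi (0:ℝ) := mem_Ioi.mpr (lt_of_lt_of_le one_pos hz1)
    refine ⟨U z, ?_⟩
    rintro v ⟨x, hx, rfl⟩
    rcases le_or_gt x z with h | h
    · have hle := hmono hx hz0 h
      nlinarith [mul_pos (mem_Ioi.mp hx) hy]
    · have hs := hconc.slope_le_deriv hz0 (mem_Ioi.mpr (lt_trans (mem_Ioi.mp hz0) h))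
        h (hdiff z hz0)
      rw [slope_def_field] at hs
      have h2 : U x - U z ≤ deriv U z * (x - z) := by
        rw [div_le_iff₀ (by linarith)] at hs; linarith
      nlinarith [mul_nonneg (sub_nonneg.mpr hz2.le) (sub_nonneg.mpr h.le),
        mul_pos hy (mem_Ioi.mp hz0)]
  -- V dominates each U x - x y
  have hVle : ∀ y : ℝ, 0 < y → ∀ x : ℝ, 0 < x → U x - x * y ≤ V y := by
    intro y hy x hx
    rw [hV y (mem_Ioi.mpr hy)]
    exact le_csSup (hbdd y hy) ⟨x, mem_Ioi.mpr hx, rfl⟩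
  -- V is nonnegative
  have hVnonneg : ∀ y : ℝ, 0 < y → 0 ≤ V y := by
    intro y hy
    have hcont : Continuous fun x : ℝ => x * y := continuous_id.mul continuous_const
    have h2 : Tendsto (fun x : ℝ => x * y) (nhdsWithin 0 (Ioi 0)) (nhds 0) := by
      simpa using (hcont.tendsto 0).mono_left nhdsWithin_le_nhds
    have ht : Tendsto (fun x => U x - x * y) (nhdsWithin 0 (Ioi 0)) (nhds 0) := by
      simpa using hU0.sub h2
    refine le_of_tendsto ht ?_
    filter_upwards [self_mem_nhdsWithin] with x hx
    exact hVle y hy x (mem_Ioi.mp hx)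
  -- the elasticity ratio is eventually bounded above by 2
  have hbound : ∀ᶠ x in atTop, x * deriv U x / U x ≤ 2 := by
    filter_upwards [eventually_ge_atTop (2:ℝ)] with x hx
    have hx0 : x ∈ Ioi (0:ℝ) := mem_Ioi.mpr (by linarith)
    have h1 : (1:ℝ) ∈ Ioi (0:ℝ) := mem_Ioi.mpr one_pos
    have hs := hconc.deriv_le_slope h1 hx0 (by linarith) (hdiff x hx0)
    rw [slope_def_field] at hs
    have hU1 : 0 < U 1 := hUpos 1 h1
    have hUx : 0 < U x := hUpos x hx0
    rw [div_le_iff₀ hUx]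
    have h2 : deriv U x * (x - 1) ≤ U x - U 1 := by
      rw [le_div_iff₀ (by linarith)] at hs; linarith
    rcases le_or_gt 0 (deriv U x) with hd | hd
    · nlinarith [mul_nonneg hd (by linarith : (0:ℝ) ≤ x - 2)]
    · nlinarith [mul_pos (show (0:ℝ) < x by linarith) (neg_pos.mpr hd)]
  -- choose γ ∈ (0,1) above the limsup
  set L := Filter.limsup (fun x => x * deriv U x / U x) atTop with hL
  set γ : ℝ := max (1/2) ((L + 1)/2) with hγ
  have hγlt : L < γ := lt_of_lt_of_le (by linarith) (le_max_right _ _)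
  have hγ1 : γ < 1 := max_lt (by norm_num) (by linarith)
  have hγpos : (0:ℝ) < γ := lt_of_lt_of_le (by norm_num) (le_max_left _ _)
  have hev : ∀ᶠ x in atTop, x * deriv U x / U x < γ :=
    eventually_lt_of_limsup_lt hγlt ⟨2, by simpa using hbound⟩
  obtain ⟨x₁, hx₁⟩ := eventually_atTop.mp hev
  set x₀ : ℝ := max x₁ 1 with hx₀def
  have hx₀1 : (1:ℝ) ≤ x₀ := le_max_right _ _
  have hx₀pos : (0:ℝ) < x₀ := lt_of_lt_of_le one_pos hx₀1
  have hkey : ∀ t : ℝ, x₀ ≤ t → t * deriv U t < γ * U t := by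
    intro t ht
    have ht0 : t ∈ Ioi (0:ℝ) := mem_Ioi.mpr (lt_of_lt_of_le hx₀pos ht)
    have := hx₁ t (le_trans (le_max_left _ _) ht)
    rwa [div_lt_iff₀ (hUpos t ht0)] at this
  set c : ℝ := 1 + γ with hc
  have hc1 : (1:ℝ) < c := by simp [hc]; linarith
  have hc2 : c < 2 := by simp [hc]; linarith
  have hcpos : (0:ℝ) < c := by linarith
  -- doubling inequality
  have hdouble : ∀ t : ℝ, x₀ ≤ t → U (2 * t) ≤ c * U t := by
    intro t ht
    have ht0 : (0:ℝ) < t := lt_of_lt_of_le hx₀pos ht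
    have htm : t ∈ Ioi (0:ℝ) := mem_Ioi.mpr ht0
    have h2t : (2*t) ∈ Ioi (0:ℝ) := mem_Ioi.mpr (by linarith)
    have hs := hconc.slope_le_deriv htm h2t (by linarith) (hdiff t htm)
    rw [slope_def_field] at hs
    have h2 : U (2*t) - U t ≤ deriv U t * (2*t - t) := by
      rw [div_le_iff₀ (by linarith)] at hs; linarith
    have hk := hkey t ht
    have he : deriv U t * (2*t - t) = t * deriv U t := by ring
    have hcc : c * U t = U t + γ * U t := by rw [hc]; ring
    linarith
  -- iterated doubling
  have hiter : ∀ m : ℕ, ∀ t : ℝ, x₀ ≤ t → U (2^m * t) ≤ c^m * U t := by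
    intro m
    induction m with
    | zero => intro t ht; simp
    | succ m ih =>
      intro t ht
      have ht0 : (0:ℝ) < t := lt_of_lt_of_le hx₀pos ht
      have h2t : x₀ ≤ 2 * t := by linarith
      have e1 : (2:ℝ)^(m+1) * t = 2^m * (2*t) := by ring
      have e2 : U (2^m * (2*t)) ≤ c^m * U (2*t) := ih (2*t) h2t
      have e3 : c^m * U (2*t) ≤ c^m * (c * U t) :=
        mul_le_mul_of_nonneg_left (hdouble t ht) (pow_nonneg hcpos.le m)
      calc U (2^(m+1) * t) = U (2^m * (2*t)) := by rw [e1]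
        _ ≤ c^m * U (2*t) := e2
        _ ≤ c^m * (c * U t) := e3
        _ = c^(m+1) * U t := by ring
  -- choose n with 2 * c^n ≤ 2^n
  obtain ⟨n, hn⟩ : ∃ n : ℕ, 2 * c^n ≤ 2^n := by
    have htend : Tendsto (fun n : ℕ => (c/2)^n) atTop (nhds 0) :=
      tendsto_pow_atTop_nhds_zero_of_lt_one (by positivity) (by linarith [hc2])
    obtain ⟨n, hn⟩ := (htend.eventually_mem (Iio_mem_nhds (by norm_num : (0:ℝ) < 1/2))).exists
    refine ⟨n, ?_⟩
    have h2n : (0:ℝ) < 2^n := by positivity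
    have : (c/2)^n < 1/2 := hn
    rw [div_pow, div_lt_iff₀ h2n] at this
    linarith
  set X : ℝ := 2^n * x₀ with hX
  set a : ℝ := c^n with ha'
  have ha : 0 < a := pow_pos hcpos n
  have hX0 : (0:ℝ) < X := by positivity
  have hXm : X ∈ Ioi (0:ℝ) := mem_Ioi.mpr hX0
  set b : ℝ := U X with hb'
  have hb : 0 < b := hUpos X hXm
  refine ⟨a, b, ha, hb, ?_⟩
  intro y hy
  rw [hV (y/2) (mem_Ioi.mpr (half_pos hy))]
  refine Real.sSup_le ?_ ?_
  · rintro v ⟨x, hx, rfl⟩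
    have hx0 : (0:ℝ) < x := mem_Ioi.mp hx
    have hV0 := hVnonneg y hy
    rcases le_or_gt x X with hle | hlt
    · have hUle : U x ≤ U X := hmono hx hXm hle
      nlinarith [mul_pos hx0 (half_pos hy), mul_pos hb hy, mul_nonneg ha.le hV0]
    · have ht : x₀ < x / 2^n := by
        rw [lt_div_iff₀ (by positivity : (0:ℝ) < 2^n)]
        calc x₀ * 2^n = X := by rw [hX]; ring
          _ < x := hlt
      set t := x / 2^n with htdef
      have ht0 : 0 < t := lt_trans hx₀pos ht
      have hxt : x = 2^n * t := by rw [htdef]; field_simp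
      have hUx : U (2^n * t) ≤ a * U t := hiter n t ht.le
      have hVy : U t - t * y ≤ V y := hVle y hy t ht0
      have haV : a * (U t - t * y) ≤ a * V y := mul_le_mul_of_nonneg_left hVy ha.le
      have hty : a * (t * y) ≤ 2^n * t * (y/2) := by
        have h := mul_le_mul_of_nonneg_right hn (le_of_lt (mul_pos ht0 hy))
        nlinarith
      have hbpos : 0 < b * (y+1) := by positivity
      calc U x - x * (y/2) ≤ a * U t - 2^n * t * (y/2) := by rw [hxt]; linarith
        _ ≤ a * U t - a * (t*y) := by linarith
        _ = a * (U t - t*y) := by ring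
        _ ≤ a * V y := haV
        _ ≤ a * V y + b * (y+1) := by linarith
  · have hV0 := hVnonneg y hy
    nlinarith [mul_nonneg ha.le hV0, mul_pos hb hy]
end

section
/- If a sequence of nonnegative measurable functions Zₙ converges to 0 almost surely and is uniformly bounded by a constant, and there exists Y with E[V(Y/(αK))] < ∞ for all α > 0, then I(αZₙ) := inf_{Y'∈Y} E[Zₙ V(Y'/(αZₙ))] → 0 for every α > 0 (hence Zₙ → 0 in the modular norm). -/
open Set Filter MeasureTheory
open scoped ENNReal

/-- If nonnegative functions `Zₙ` converge to `0` a.s. and are uniformly bounded by `K`,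
and some `Y ∈ 𝒴` satisfies `E[V(βY)] < ∞` for all `β > 0`, then
`I(αZₙ) = inf_{Y'∈𝒴} E[Zₙ V(Y'/(αZₙ))] → 0` for every `α > 0`. -/
theorem modular_convergence_of_bounded_ae_to_zero
    {Ω : Type*} [MeasurableSpace Ω] (P : Measure Ω) [IsProbabilityMeasure P]
    (V : ℝ → ℝ)
    (hVconv : ConvexOn ℝ (Ioi 0) V)
    (hVanti : AntitoneOn V (Ioi 0))
    (hVpos : ∀ y > (0:ℝ), 0 < V y)
    (hmono : ∀ y > (0:ℝ), MonotoneOn (fun z => z * V (y / z)) (Ioi 0))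
    (𝒴 : Set (Ω → ℝ))
    (h𝒴nonneg : ∀ Y ∈ 𝒴, ∀ᵐ ω ∂P, 0 ≤ Y ω)
    (hY : ∃ Y ∈ 𝒴, ∀ β > (0:ℝ), ∫⁻ ω, ENNReal.ofReal (V (β * Y ω)) ∂P < ⊤)
    (Z : ℕ → Ω → ℝ)
    (hZnn : ∀ n, ∀ᵐ ω ∂P, 0 ≤ Z n ω)
    (hZae : ∀ᵐ ω ∂P, Tendsto (fun n => Z n ω) atTop (nhds 0))
    (K : ℝ) (hK : 0 < K)
    (hZbd : ∀ n, ∀ᵐ ω ∂P, Z n ω ≤ K) :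
    ∀ α > (0:ℝ),
      Tendsto (fun n => ⨅ Y ∈ 𝒴,
        ∫⁻ ω, ENNReal.ofReal
          (if Z n ω = 0 then 0 else Z n ω * V (Y ω / (α * Z n ω))) ∂P)
        atTop (nhds 0) := by
  intro α hα
  obtain ⟨Y, hYmem, hYint⟩ := hY
  set β : ℝ := (α * K)⁻¹ with hβ
  have hβpos : 0 < β := by positivity
  set W : Ω → ℝ≥0∞ :=
    fun ω => max (ENNReal.ofReal (V 0)) (ENNReal.ofReal (V (β * Y ω))) with hW
  have hWfin : ∀ ω, W ω ≠ ∞ := fun ω =>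
    (max_lt ENNReal.ofReal_lt_top ENNReal.ofReal_lt_top).ne
  have hM : ∫⁻ ω, W ω ∂P < ⊤ := by
    calc ∫⁻ ω, W ω ∂P
        ≤ ∫⁻ ω, (ENNReal.ofReal (V 0) + ENNReal.ofReal (V (β * Y ω))) ∂P :=
          lintegral_mono fun ω => max_le le_self_add le_add_self
      _ = ENNReal.ofReal (V 0) * P univ + ∫⁻ ω, ENNReal.ofReal (V (β * Y ω)) ∂P := by
          rw [lintegral_add_left measurable_const, lintegral_const]
      _ < ⊤ := by
          refine ENNReal.add_lt_top.2 ⟨?_, hYint β hβpos⟩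
          exact ENNReal.mul_lt_top ENNReal.ofReal_lt_top (measure_lt_top _ _)
  set f : ℕ → Ω → ℝ≥0∞ := fun n ω =>
    ENNReal.ofReal (if Z n ω = 0 then 0 else Z n ω * V (Y ω / (α * Z n ω))) with hf
  have hae : ∀ᵐ ω ∂P, 0 ≤ Y ω ∧ (∀ n, 0 ≤ Z n ω) ∧ (∀ n, Z n ω ≤ K) ∧
      Tendsto (fun n => Z n ω) atTop (nhds 0) := by
    filter_upwards [h𝒴nonneg Y hYmem, ae_all_iff.2 hZnn, ae_all_iff.2 hZbd, hZae]
      with ω h1 h2 h3 h4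
    exact ⟨h1, h2, h3, h4⟩
  have hpt : ∀ᵐ ω ∂P, ∀ n, f n ω ≤ ENNReal.ofReal (Z n ω) * W ω := by
    filter_upwards [hae] with ω hω n
    obtain ⟨hY0, hZ0, hZK, -⟩ := hω
    by_cases hz : Z n ω = 0
    · simp [hf, hz]
    have hzpos : 0 < Z n ω := lt_of_le_of_ne (hZ0 n) (Ne.symm hz)
    simp only [hf, if_neg hz]
    rcases eq_or_lt_of_le hY0 with hy0 | hy0
    · have hdiv : Y ω / (α * Z n ω) = 0 := by rw [← hy0]; simp
      rw [hdiv, ENNReal.ofReal_mul (hZ0 n)]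
      exact mul_le_mul_right (le_max_left _ _) _
    · have h1 : β * Y ω = Y ω / (α * K) := by
        rw [hβ]; field_simp
      have h2 : Y ω / (α * K) ≤ Y ω / (α * Z n ω) := by
        gcongr
        all_goals first
          | exact hy0.le
          | exact hzpos
          | exact hZK n
          | exact mul_pos hα hzpos
          | exact mul_le_mul_of_nonneg_left (hZK n) hα.le
      have h3 : V (Y ω / (α * Z n ω)) ≤ V (β * Y ω) := by
        rw [h1]
        exact hVanti (mem_Ioi.mpr (div_pos hy0 (mul_pos hα hK)))
          (mem_Ioi.mpr (div_pos hy0 (mul_pos hα hzpos))) h2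
      calc ENNReal.ofReal (Z n ω * V (Y ω / (α * Z n ω)))
          ≤ ENNReal.ofReal (Z n ω * V (β * Y ω)) :=
            ENNReal.ofReal_le_ofReal (mul_le_mul_of_nonneg_left h3 (hZ0 n))
        _ = ENNReal.ofReal (Z n ω) * ENNReal.ofReal (V (β * Y ω)) :=
            ENNReal.ofReal_mul (hZ0 n)
        _ ≤ ENNReal.ofReal (Z n ω) * W ω := mul_le_mul_right (le_max_right _ _) _
  have H : ∀ n, ∃ g : Ω → ℝ≥0∞, Measurable g ∧ g ≤ f n ∧
      ∫⁻ ω, f n ω ∂P = ∫⁻ ω, g ω ∂P :=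
    fun n => exists_measurable_le_lintegral_eq P (f n)
  choose g hgmeas hgle hgeq using H
  have hGmeas : Measurable (fun ω => ⨆ n, g n ω) := Measurable.iSup hgmeas
  have hGfin : ∫⁻ ω, (⨆ n, g n ω) ∂P ≠ ⊤ := by
    have hle : ∫⁻ ω, (⨆ n, g n ω) ∂P ≤ ∫⁻ ω, ENNReal.ofReal K * W ω ∂P := by
      refine lintegral_mono_ae ?_
      filter_upwards [hpt, hae] with ω h1 h2
      refine iSup_le fun n => (hgle n ω).trans ((h1 n).trans ?_)
      exact mul_le_mul_left (ENNReal.ofReal_le_ofReal (h2.2.2.1 n)) _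
    rw [lintegral_const_mul' _ _ ENNReal.ofReal_ne_top] at hle
    exact (hle.trans_lt (ENNReal.mul_lt_top ENNReal.ofReal_lt_top hM)).ne
  have hglim : ∀ᵐ ω ∂P, Tendsto (fun n => g n ω) atTop (nhds 0) := by
    filter_upwards [hpt, hae] with ω h1 h2
    have hub : Tendsto (fun n => ENNReal.ofReal (Z n ω) * W ω) atTop (nhds 0) := by
      have h3 : Tendsto (fun n => ENNReal.ofReal (Z n ω)) atTop (nhds 0) := by
        simpa using ENNReal.tendsto_ofReal h2.2.2.2
      simpa using ENNReal.Tendsto.mul_const h3 (Or.inr (hWfin ω))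
    exact tendsto_of_tendsto_of_tendsto_of_le_of_le tendsto_const_nhds hub
      (fun n => zero_le) (fun n => (hgle n ω).trans (h1 n))
  have hkey : Tendsto (fun n => ∫⁻ ω, f n ω ∂P) atTop (nhds 0) := by
    have hdct := tendsto_lintegral_of_dominated_convergence (μ := P)
      (F := g) (f := fun _ => 0) (fun ω => ⨆ n, g n ω) hgmeas
      (fun n => Eventually.of_forall fun ω => le_iSup (fun m => g m ω) n) hGfin hglim
    rw [show (fun n => ∫⁻ ω, f n ω ∂P) = (fun n => ∫⁻ ω, g n ω ∂P) from funext hgeq]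
    simpa using hdct
  refine tendsto_of_tendsto_of_tendsto_of_le_of_le tendsto_const_nhds hkey
    (fun n => zero_le) (fun n => ?_)
  exact iInf₂_le Y hYmem
end

section
/- If L is a Banach lattice of measurable functions on a probability space whose norm is order-continuous, and the norm dominates the functional Z ↦ sup_{Y∈Y} E[|Z| Y] in the sense that ‖1_A‖ → 0 implies sup_{Y∈Y} E[1_A Y] → 0 along disjoint sequences of sets Aₙ, then the family Y of nonnegative integrable random variables is uniformly integrable. -/
open Set Filter MeasureTheory
open scoped ENNReal

/-- Strong recursion for a real sequence where each term may depend on all previous terms. -/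
noncomputable def uicSeq (f : ℕ → (ℕ → ℝ) → ℝ) : ℕ → ℝ
  | n => f n (fun j => if h : j < n then uicSeq f j else 0)
decreasing_by exact h

lemma uicSeq_def (f : ℕ → (ℕ → ℝ) → ℝ) (n : ℕ) :
    uicSeq f n = f n (fun j => if h : j < n then uicSeq f j else 0) := by
  rw [uicSeq]

/-- The key construction: if for every `C ≥ 1` there is a measurable nonnegative `Φ C` with
unit-bounded lintegral whose tail integral beyond `C` exceeds `ε`, then we can find a disjoint
sequence of measurable sets on which the integrals stay at least `ε/2`. -/
lemma uic_aux {Ω : Type*} [MeasurableSpace Ω] (P : Measure Ω) [IsProbabilityMeasure P]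
    (ε : ℝ≥0∞) (hε0 : ε ≠ 0) (hεtop : ε ≠ ∞)
    (Φ : ℝ → Ω → ℝ)
    (hmeas : ∀ C, Measurable (Φ C))
    (hnn : ∀ C ω, 0 ≤ Φ C ω)
    (hone : ∀ C, ∫⁻ ω, ENNReal.ofReal (Φ C ω) ∂P ≤ 1)
    (hbig : ∀ C, 1 ≤ C → ε < ∫⁻ ω in {ω | C ≤ Φ C ω}, ENNReal.ofReal (Φ C ω) ∂P) :
    ∃ A : ℕ → Set Ω, (∀ n, MeasurableSet (A n)) ∧ Pairwise (Function.onFun Disjoint A) ∧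
      ∃ g : ℕ → ℝ, ∀ n, 1 ≤ g n ∧
        ε / 2 ≤ ∫⁻ ω in A n, ENNReal.ofReal (Φ (g n) ω) ∂P := by
  -- absolute continuity thresholds
  have habs : ∀ c : ℝ, ∀ η : ℝ≥0∞, ∃ D : ℝ, η ≠ 0 → ∀ (Cr : ℝ) (S : Set Ω), D < Cr → 1 ≤ Cr →
      P S ≤ (ENNReal.ofReal Cr)⁻¹ → ∫⁻ ω in S, ENNReal.ofReal (Φ c ω) ∂P < η := by
    intro c η
    by_cases hη : η = 0
    · exact ⟨0, fun h => (h hη).elim⟩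
    obtain ⟨δ, hδ0, hδ⟩ := exists_pos_setLIntegral_lt_of_measure_lt
      (μ := P) (f := fun ω => ENNReal.ofReal (Φ c ω))
      (ne_top_of_le_ne_top ENNReal.one_ne_top (hone c)) hη
    refine ⟨δ⁻¹.toReal, fun _ Cr S hD h1 hS => hδ S (lt_of_le_of_lt hS ?_)⟩
    rw [← inv_inv δ]
    apply ENNReal.inv_lt_inv.2
    have hfin : δ⁻¹ ≠ ∞ := ENNReal.inv_ne_top.2 hδ0.ne'
    calc δ⁻¹ = ENNReal.ofReal δ⁻¹.toReal := (ENNReal.ofReal_toReal hfin).symm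
      _ < ENNReal.ofReal Cr := by
          exact (ENNReal.ofReal_lt_ofReal_iff (lt_of_lt_of_le one_pos h1)).2 hD
  choose d hd using habs
  -- the recursively defined thresholds
  set step : ℕ → (ℕ → ℝ) → ℝ :=
    fun n prev => 1 + ∑ j ∈ Finset.range n, max 0 (d (prev j) (ε / 2 ^ (n + 2))) with hstep
  set C : ℕ → ℝ := uicSeq step with hC
  have hCdef : ∀ n, C n = 1 + ∑ j ∈ Finset.range n, max 0 (d (C j) (ε / 2 ^ (n + 2))) := by
    intro n
    rw [hC, uicSeq_def]
    simp only [hstep]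
    congr 1
    refine Finset.sum_congr rfl fun j hj => ?_
    rw [dif_pos (Finset.mem_range.1 hj)]
  have hC1 : ∀ n, 1 ≤ C n := by
    intro n
    rw [hCdef n]
    exact le_add_of_nonneg_right (Finset.sum_nonneg fun _ _ => le_max_left 0 _)
  have hCd : ∀ j n, j < n → d (C j) (ε / 2 ^ (n + 2)) < C n := by
    intro j n h
    calc d (C j) (ε / 2 ^ (n + 2)) ≤ max 0 (d (C j) (ε / 2 ^ (n + 2))) := le_max_right _ _
      _ ≤ ∑ i ∈ Finset.range n, max 0 (d (C i) (ε / 2 ^ (n + 2))) :=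
          Finset.single_le_sum (f := fun i => max (0:ℝ) (d (C i) (ε / 2 ^ (n + 2))))
            (fun i _ => le_max_left 0 _) (Finset.mem_range.2 h)
      _ < 1 + _ := lt_one_add _
      _ = C n := (hCdef n).symm
  set B : ℕ → Set Ω := fun n => {ω | C n ≤ Φ (C n) ω} with hBdef
  have hBmeas : ∀ n, MeasurableSet (B n) :=
    fun n => measurableSet_le measurable_const (hmeas _)
  have hBsmall : ∀ n, P (B n) ≤ (ENNReal.ofReal (C n))⁻¹ := by
    intro n
    have h1 : B n = {ω | ENNReal.ofReal (C n) ≤ ENNReal.ofReal (Φ (C n) ω)} := by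
      ext ω
      simp [hBdef, ENNReal.ofReal_le_ofReal_iff (hnn (C n) ω)]
    have h2 := mul_meas_ge_le_lintegral₀ (μ := P)
      ((ENNReal.measurable_ofReal.comp (hmeas (C n))).aemeasurable) (ENNReal.ofReal (C n))
    rw [h1]
    exact ENNReal.le_inv_iff_mul_le.2 (by rw [mul_comm]; exact h2.trans (hone _))
  have hη0 : ∀ n : ℕ, (ε / 2 ^ (n + 2) : ℝ≥0∞) ≠ 0 := by
    intro n
    simp only [ne_eq, ENNReal.div_eq_zero_iff, not_or]
    exact ⟨hε0, ENNReal.pow_ne_top ENNReal.ofNat_ne_top⟩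
  have hsmall : ∀ j n, j < n →
      ∫⁻ ω in B n, ENNReal.ofReal (Φ (C j) ω) ∂P < ε / 2 ^ (n + 2) :=
    fun j n hjn => hd (C j) (ε / 2 ^ (n + 2)) (hη0 n) (C n) (B n) (hCd j n hjn) (hC1 n) (hBsmall n)
  set A : ℕ → Set Ω := fun n => B n \ ⋃ k, B (n + 1 + k) with hAdef
  have hAmeas : ∀ n, MeasurableSet (A n) :=
    fun n => (hBmeas n).diff (MeasurableSet.iUnion fun k => hBmeas _)
  have hkey : ∀ m n, m < n → Disjoint (A m) (A n) := by
    intro m n h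
    refine Set.disjoint_left.2 fun x hxm hxn => ?_
    refine hxm.2 (Set.mem_iUnion.2 ⟨n - m - 1, ?_⟩)
    have hmn : m + 1 + (n - m - 1) = n := by omega
    rw [hmn]
    exact hxn.1
  have hAdisj : Pairwise (Function.onFun Disjoint A) := by
    intro m n hmn
    rcases hmn.lt_or_gt with h | h
    · exact hkey m n h
    · exact (hkey n m h).symm
  refine ⟨A, hAmeas, hAdisj, C, fun n => ⟨hC1 n, ?_⟩⟩
  have hbn := hbig (C n) (hC1 n)
  have hsplit : ∫⁻ ω in B n, ENNReal.ofReal (Φ (C n) ω) ∂P ≤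
      (∫⁻ ω in A n, ENNReal.ofReal (Φ (C n) ω) ∂P) +
      ∫⁻ ω in ⋃ k, B (n + 1 + k), ENNReal.ofReal (Φ (C n) ω) ∂P := by
    calc ∫⁻ ω in B n, ENNReal.ofReal (Φ (C n) ω) ∂P
        ≤ ∫⁻ ω in A n ∪ ⋃ k, B (n + 1 + k), ENNReal.ofReal (Φ (C n) ω) ∂P :=
          lintegral_mono_set (Set.subset_diff_union _ _)
      _ ≤ _ := lintegral_union_le _ _ _
  have htail : ∫⁻ ω in ⋃ k, B (n + 1 + k), ENNReal.ofReal (Φ (C n) ω) ∂P ≤ ε / 2 := by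
    calc ∫⁻ ω in ⋃ k, B (n + 1 + k), ENNReal.ofReal (Φ (C n) ω) ∂P
        ≤ ∑' k, ∫⁻ ω in B (n + 1 + k), ENNReal.ofReal (Φ (C n) ω) ∂P :=
          lintegral_iUnion_le _ _
      _ ≤ ∑' k : ℕ, ε / 2 ^ (n + 1 + k + 2) :=
          ENNReal.tsum_le_tsum fun k => (hsmall n (n + 1 + k) (by omega)).le
      _ = ∑' k : ℕ, ε / 2 ^ (n + 3 + k) := by
          refine tsum_congr fun k => ?_
          rw [show n + 1 + k + 2 = n + 3 + k from by omega]
      _ = ∑' k : ℕ, (ε * 2⁻¹ ^ (n + 3)) * 2⁻¹ ^ k := by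
          refine tsum_congr fun k => ?_
          rw [mul_assoc, ← pow_add, ← ENNReal.inv_pow, ← div_eq_mul_inv]
      _ = ε * 2⁻¹ ^ (n + 3) * (1 - 2⁻¹)⁻¹ := by
          rw [ENNReal.tsum_mul_left, ENNReal.tsum_geometric]
      _ = ε * 2⁻¹ ^ (n + 2) * (2⁻¹ * 2) := by
          rw [ENNReal.one_sub_inv_two, inv_inv, pow_succ]
          ring
      _ = ε * 2⁻¹ ^ (n + 2) := by
          rw [ENNReal.inv_mul_cancel (by norm_num) ENNReal.ofNat_ne_top, mul_one]
      _ ≤ ε * 2⁻¹ ^ 1 :=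
          mul_le_mul_right (pow_le_pow_right_of_le_one' (ENNReal.inv_le_one.2 one_le_two)
            (by omega)) ε
      _ = ε / 2 := by rw [pow_one, div_eq_mul_inv]
  by_contra hcon
  push_neg at hcon
  have h1 : ε < ε / 2 + ε / 2 := by
    calc ε < ∫⁻ ω in B n, ENNReal.ofReal (Φ (C n) ω) ∂P := hbn
      _ ≤ (∫⁻ ω in A n, ENNReal.ofReal (Φ (C n) ω) ∂P) + ε / 2 :=
          hsplit.trans (add_le_add_right htail _)
      _ < ε / 2 + ε / 2 :=
          ENNReal.add_lt_add_right (by simp [ENNReal.div_eq_top, hεtop]) hcon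
  rw [ENNReal.add_halves] at h1
  exact absurd h1 (lt_irrefl _)

/-- If the norm `N` of a Banach lattice of measurable functions is order-continuous
(so `N(1_{Aₙ}) → 0` along disjoint sequences of sets) and dominates the functional
`Z ↦ sup_{Y∈𝒴} E[1_A Y]` in the sense that `N(1_{Aₙ}) → 0` implies
`sup_{Y∈𝒴} E[1_{Aₙ} Y] → 0` along disjoint sequences, then the family `𝒴` of
nonnegative integrable random variables (with `sup E[Y] ≤ 1`) is uniformly integrable. -/
theorem uniformly_integrable_of_order_continuous
    {Ω : Type*} [MeasurableSpace Ω] (P : Measure Ω) [IsProbabilityMeasure P]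
    (𝒴 : Set (Ω → ℝ))
    (hpos : ∀ Y ∈ 𝒴, ∀ᵐ ω ∂P, 0 ≤ Y ω)
    (hint : ∀ Y ∈ 𝒴, Integrable Y P)
    (hbdd : ∀ Y ∈ 𝒴, ∫ ω, Y ω ∂P ≤ 1)
    (N : (Ω → ℝ) → ℝ)
    (hOC : ∀ A : ℕ → Set Ω, (∀ n, MeasurableSet (A n)) → Pairwise (Function.onFun Disjoint A) →
      Tendsto (fun n => N (Set.indicator (A n) (fun _ => (1:ℝ)))) atTop (nhds 0))
    (hdom : ∀ A : ℕ → Set Ω, (∀ n, MeasurableSet (A n)) → Pairwise (Function.onFun Disjoint A) →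
      Tendsto (fun n => N (Set.indicator (A n) (fun _ => (1:ℝ)))) atTop (nhds 0) →
      Tendsto (fun n => ⨆ Y ∈ 𝒴, ∫⁻ ω in A n, ENNReal.ofReal (Y ω) ∂P) atTop (nhds 0)) :
    ∀ ε > (0:ℝ), ∃ C : ℝ, 0 < C ∧ ∀ Y ∈ 𝒴,
      ∫⁻ ω in {ω | C ≤ Y ω}, ENNReal.ofReal (Y ω) ∂P ≤ ENNReal.ofReal ε := by
  intro ε hε
  by_contra hcon
  push_neg at hcon
  have key : ∀ C : ℝ, ∃ Z : Ω → ℝ, Measurable Z ∧ (∀ ω, 0 ≤ Z ω) ∧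
      (∫⁻ ω, ENNReal.ofReal (Z ω) ∂P ≤ 1) ∧
      (1 ≤ C → (ENNReal.ofReal ε < ∫⁻ ω in {ω | C ≤ Z ω}, ENNReal.ofReal (Z ω) ∂P) ∧
        ∃ Y ∈ 𝒴, ∀ᵐ ω ∂P, Z ω = Y ω) := by
    intro C
    by_cases hC : 1 ≤ C
    · obtain ⟨Y, hY, hYlt⟩ := hcon C (lt_of_lt_of_le one_pos hC)
      have m := (hint Y hY).aemeasurable
      set Z : Ω → ℝ := fun ω => max (m.mk Y ω) 0 with hZdef
      have hZmeas : Measurable Z := m.measurable_mk.max measurable_const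
      have hZnn : ∀ ω, 0 ≤ Z ω := fun ω => le_max_right _ _
      have hZae : ∀ᵐ ω ∂P, Z ω = Y ω := by
        filter_upwards [m.ae_eq_mk, hpos Y hY] with ω h1 h2
        rw [hZdef]
        simp only
        rw [← h1, max_eq_left h2]
      have hZint : ∫⁻ ω, ENNReal.ofReal (Z ω) ∂P = ∫⁻ ω, ENNReal.ofReal (Y ω) ∂P :=
        lintegral_congr_ae (hZae.mono fun ω h => by simp only [h])
      have hZone : ∫⁻ ω, ENNReal.ofReal (Z ω) ∂P ≤ 1 := by
        rw [hZint, ← ofReal_integral_eq_lintegral_ofReal (hint Y hY) (hpos Y hY)]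
        calc ENNReal.ofReal (∫ ω, Y ω ∂P) ≤ ENNReal.ofReal 1 :=
              ENNReal.ofReal_le_ofReal (hbdd Y hY)
          _ = 1 := ENNReal.ofReal_one
      have hset : {ω | C ≤ Z ω} =ᵐ[P] {ω | C ≤ Y ω} := by
        refine eventuallyEq_set.2 (hZae.mono fun ω h => ?_)
        simp [Set.mem_setOf_eq, h]
      have heq : ∫⁻ ω in {ω | C ≤ Z ω}, ENNReal.ofReal (Z ω) ∂P =
          ∫⁻ ω in {ω | C ≤ Y ω}, ENNReal.ofReal (Y ω) ∂P := by
        rw [setLIntegral_congr hset]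
        exact lintegral_congr_ae (ae_restrict_of_ae (hZae.mono fun ω h => by simp only [h]))
      exact ⟨Z, hZmeas, hZnn, hZone, fun _ => ⟨heq ▸ hYlt, Y, hY, hZae⟩⟩
    · exact ⟨fun _ => 0, measurable_const, fun _ => le_rfl, by simp, fun h => absurd h hC⟩
  choose Φ hΦm hΦnn hΦ1 hΦbig using key
  obtain ⟨A, hAm, hAd, g, hg⟩ := uic_aux P (ENNReal.ofReal ε)
    (ne_of_gt (ENNReal.ofReal_pos.2 hε)) ENNReal.ofReal_ne_top Φ hΦm hΦnn hΦ1
    (fun C hC => (hΦbig C hC).1)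
  have htend := hdom A hAm hAd (hOC A hAm hAd)
  have hev := htend.eventually_lt_const
    (show (0:ℝ≥0∞) < ENNReal.ofReal ε / 2 from
      ENNReal.div_pos (ENNReal.ofReal_pos.2 hε).ne' ENNReal.ofNat_ne_top)
  obtain ⟨n, hn⟩ := hev.exists
  obtain ⟨hg1, hglow⟩ := hg n
  obtain ⟨Y, hY, hZY⟩ := (hΦbig (g n) hg1).2
  have hle : ENNReal.ofReal ε / 2 ≤ ⨆ Y ∈ 𝒴, ∫⁻ ω in A n, ENNReal.ofReal (Y ω) ∂P := by
    refine hglow.trans (le_trans (le_of_eq ?_) (le_biSup _ hY))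
    exact lintegral_congr_ae (ae_restrict_of_ae (hZY.mono fun ω h => by simp only [h]))
  exact absurd (hle.trans_lt hn) (lt_irrefl _)
end
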